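/- Let W be a real vector space of dimension n ≥ 3 and F a real vector space. Suppose α : W × W → F is an alternating bilinear map such that α(y, z) ⊗ x − α(x, z) ⊗ y + α(x, y) ⊗ z = 0 in F ⊗ W for all x, y, z ∈ W. Then α = 0. -/

import Mathlib

open TensorProduct

lemma exists_dual_fin3' {W : Type*} [AddCommGroup W] [Module ℝ W] {v : Fin 3 → W}
    (hv : LinearIndependent ℝ v) :
    ∃ φ : W →ₗ[ℝ] ℝ, φ (v 0) = 1 ∧ φ (v 1) = 0 ∧ φ (v 2) = 0 := by
  classical
  set b := Module.Basis.extend hv.linearIndepOn_id with hb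
  have hsub : Set.range v ⊆ hv.linearIndepOn_id.extend (Set.subset_univ _) :=
    hv.linearIndepOn_id.subset_extend _
  have hmem : ∀ i, v i ∈ hv.linearIndepOn_id.extend (Set.subset_univ _) :=
    fun i => hsub (Set.mem_range_self i)
  have hinj := hv.injective
  have key : ∀ i j : Fin 3, b.coord ⟨v i, hmem i⟩ (v j)
      = if i = j then 1 else 0 := by
    intro i j
    have h1 : b.repr (v j) = Finsupp.single ⟨v j, hmem j⟩ 1 := by
      have := b.repr_self ⟨v j, hmem j⟩
      rwa [hb, Module.Basis.extend_apply_self] at this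
    rw [Module.Basis.coord_apply, h1, Finsupp.single_apply]
    simp [Subtype.ext_iff, hinj.eq_iff, eq_comm]
  exact ⟨b.coord ⟨v 0, hmem 0⟩, by simpa using key 0 0, by simpa using key 0 1,
    by simpa using key 0 2⟩

/-- If `dim W ≥ 3` and `α : W × W → F` is an alternating bilinear map such that
`α(y,z) ⊗ x − α(x,z) ⊗ y + α(x,y) ⊗ z = 0` in `F ⊗ W` for all `x, y, z ∈ W`, then `α = 0`. -/
theorem alternating_tensor_cocycle_eq_zero
    (W F : Type*) [AddCommGroup W] [Module ℝ W] [AddCommGroup F] [Module ℝ F]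
    [FiniteDimensional ℝ W] (hn : 3 ≤ Module.finrank ℝ W)
    (α : W [⋀^Fin 2]→ₗ[ℝ] F)
    (h : ∀ x y z : W,
      α ![y, z] ⊗ₜ[ℝ] x - α ![x, z] ⊗ₜ[ℝ] y + α ![x, y] ⊗ₜ[ℝ] z = (0 : F ⊗[ℝ] W)) :
    α = 0 := by
  have main : ∀ x y : W, α ![x, y] = 0 := by
    intro x y
    by_cases hind : LinearIndependent ℝ ![x, y]
    · -- independent case: pick z outside span
      have hz : ∃ z, z ∉ Submodule.span ℝ (Set.range ![x, y]) := by
        by_contra hc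
        push_neg at hc
        have htop : Submodule.span ℝ (Set.range ![x, y]) = ⊤ :=
          Submodule.eq_top_iff'.2 hc
        have h2 : Module.finrank ℝ (Submodule.span ℝ (Set.range ![x, y])) = 2 := by
          rw [finrank_span_eq_card hind]; simp
        rw [htop, finrank_top] at h2
        omega
      obtain ⟨z, hz⟩ := hz
      have hv : LinearIndependent ℝ (Fin.cons z ![x, y] : Fin 3 → W) :=
        hind.fin_cons hz
      obtain ⟨φ, hφ0, hφ1, hφ2⟩ := exists_dual_fin3' hv
      simp only [Fin.cons_zero] at hφ0
      have hφx : φ x = 0 := by simpa using hφ1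
      have hφy : φ y = 0 := by simpa using hφ2
      let L : F ⊗[ℝ] W →ₗ[ℝ] F :=
        (TensorProduct.rid ℝ F).toLinearMap ∘ₗ LinearMap.lTensor F φ
      have := congrArg L (h x y z)
      simpa [L, hφx, hφy, hφ0] using this
    · -- dependent case
      rw [linearIndependent_fin2] at hind
      push_neg at hind
      simp only [Matrix.cons_val_one, Matrix.head_cons, Matrix.cons_val_zero] at hind
      by_cases hy : y = 0
      · subst hy
        exact α.map_coord_zero 1 (by simp)
      · obtain ⟨a, ha⟩ := hind hy
        subst ha
        have h1 : (![a • y, y] : Fin 2 → W) = Function.update ![y, y] 0 (a • y) := by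
          ext i
          fin_cases i <;> simp
        have h2 : (![y, y] : Fin 2 → W) = Function.update ![y, y] 0 y := by
          ext i
          fin_cases i <;> simp
        rw [h1, α.map_update_smul, ← h2, α.map_eq_zero_of_eq _ (i := 0) (j := 1) (by simp) (by decide),
          smul_zero]
  ext m
  have hm : m = ![m 0, m 1] := by
    ext i; fin_cases i <;> simp
  rw [hm, main]
  rfl
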